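/- Assume that no nonzero X ∈ 𝔫 satisfies [k, X] = 0 for all k ∈ 𝔨. Let A be an endomorphism of 𝔪 that is symmetric with respect to Q and satisfies π_𝔪([k, A.V]) = A.(π_𝔪([k, V])) for all k ∈ 𝔨 and V ∈ 𝔪, where π_𝔪 is the Q-orthogonal projection of 𝔤 onto 𝔪. Then A preserves the splitting 𝔪 = 𝔱 ⊕ 𝔫, that is, A(𝔱) ⊆ 𝔱 and A(𝔫) ⊆ 𝔫. -/

import Mathlib

open scoped RealInnerProductSpace

noncomputable section

variable {G : Type*} [NormedAddCommGroup G] [InnerProductSpace ℝ G] [FiniteDimensional ℝ G]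

/-- Orthogonal projection onto the subspace `W`, as a plain map `G → G`. -/
def pr (W : Submodule ℝ G) : G → G := fun v => (Submodule.orthogonalProjectionOnto W v : G)

/-- Orthogonal projection onto the subspace `W`, as a continuous linear endomorphism of `G`. -/
def projL (W : Submodule ℝ G) : G →L[ℝ] G := W.subtypeL.comp (Submodule.orthogonalProjectionOnto W)

variable (br : G →ₗ[ℝ] G →ₗ[ℝ] G)

/-- `br` is a Lie bracket making `G` a real Lie algebra, and the inner product `Q` of `G`
is ad-invariant: `Q([Z,X],Y) + Q(X,[Z,Y]) = 0`. -/
structure IsLieQ : Prop where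
  alt : ∀ x : G, br x x = 0
  jacobi : ∀ x y z : G, br x (br y z) + br y (br z x) + br z (br x y) = 0
  adInv : ∀ Z X Y : G, ⟪br Z X, Y⟫ + ⟪X, br Z Y⟫ = 0

/-- `𝔥 ⊆ 𝔨` are Lie subalgebras of `𝔤` with `[𝔨,𝔨] ⊆ 𝔥`. -/
structure IsToralPair (𝔥 𝔨 : Submodule ℝ G) : Prop where
  subalg_h : ∀ x ∈ 𝔥, ∀ y ∈ 𝔥, br x y ∈ 𝔥
  subalg_k : ∀ x ∈ 𝔨, ∀ y ∈ 𝔨, br x y ∈ 𝔨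
  h_le_k : 𝔥 ≤ 𝔨
  bk_in_h : ∀ x ∈ 𝔨, ∀ y ∈ 𝔨, br x y ∈ 𝔥

/-- no nonzero element of `𝔫 = 𝔨ᗮ` commutes with all of `𝔨`. -/
def NoTrivial (𝔨 : Submodule ℝ G) : Prop :=
  ∀ X ∈ 𝔨ᗮ, (∀ k ∈ 𝔨, br k X = 0) → X = 0

/-- a `Q`-symmetric endomorphism `A` of `𝔪 = 𝔥ᗮ` commuting with the projected
adjoint action of `𝔨` preserves the splitting `𝔪 = 𝔱 ⊕ 𝔫`, where `𝔱 = 𝔨 ⊓ 𝔥ᗮ` and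
`𝔫 = 𝔨ᗮ`. -/
theorem symmetric_equivariant_preserves_splitting
    (hLie : IsLieQ br) (𝔥 𝔨 : Submodule ℝ G) (hpair : IsToralPair br 𝔥 𝔨)
    (hmax : NoTrivial br 𝔨)
    (A : G →ₗ[ℝ] G)
    (hAm : ∀ V ∈ 𝔥ᗮ, A V ∈ 𝔥ᗮ)
    (hAsym : ∀ V ∈ 𝔥ᗮ, ∀ W ∈ 𝔥ᗮ, ⟪A V, W⟫ = ⟪V, A W⟫)
    (hAequiv : ∀ k ∈ 𝔨, ∀ V ∈ 𝔥ᗮ, pr 𝔥ᗮ (br k (A V)) = A (pr 𝔥ᗮ (br k V))) :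
    (∀ T ∈ 𝔨 ⊓ 𝔥ᗮ, A T ∈ 𝔨 ⊓ 𝔥ᗮ) ∧ (∀ X ∈ 𝔨ᗮ, A X ∈ 𝔨ᗮ) := by

  -- decomposition facts
  have horth : ∀ v : G, v - pr 𝔥ᗮ v ∈ 𝔥 := by
    intro v
    have h := Submodule.sub_starProjection_mem_orthogonal (K := 𝔥ᗮ) v
    rwa [Submodule.orthogonal_orthogonal] at h
  have hprmem : ∀ (W : Submodule ℝ G) (v : G), pr W v ∈ W := by
    intro W v; exact (Submodule.orthogonalProjectionOnto W v).2
  -- part 1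
  have part1 : ∀ T ∈ 𝔨 ⊓ 𝔥ᗮ, A T ∈ 𝔨 ⊓ 𝔥ᗮ := by
    intro T hT
    obtain ⟨hTk, hTm⟩ := hT
    -- br k T ∈ 𝔥 for k ∈ 𝔨, so pr 𝔥ᗮ (br k T) = 0
    have hproj0 : ∀ k ∈ 𝔨, pr 𝔥ᗮ (br k (A T)) = 0 := by
      intro k hk
      have h1 : br k T ∈ 𝔥 := hpair.bk_in_h k hk T hTk
      have h2 : pr 𝔥ᗮ (br k T) = 0 := by
        have : br k T ∈ 𝔥ᗮᗮ := Submodule.le_orthogonal_orthogonal 𝔥 h1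
        simp [pr, Submodule.orthogonalProjectionOnto_apply_of_mem_orthogonal this]
      rw [hAequiv k hk T hTm, h2, map_zero]
    -- hence br k (A T) ∈ 𝔥
    have hbrh : ∀ k ∈ 𝔨, br k (A T) ∈ 𝔥 := by
      intro k hk
      have := horth (br k (A T))
      rwa [hproj0 k hk, sub_zero] at this
    -- split A T into 𝔨 part and 𝔨ᗮ part
    set Y : G := (Submodule.orthogonalProjectionOnto 𝔨 (A T) : G) with hY
    set X : G := A T - Y with hX
    have hXmem : X ∈ 𝔨ᗮ := Submodule.sub_starProjection_mem_orthogonal (K := 𝔨) (A T)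
    have hYk : Y ∈ 𝔨 := (Submodule.orthogonalProjectionOnto 𝔨 (A T)).2
    have hXzero : X = 0 := by
      apply hmax X hXmem
      intro k hk
      have hbrX : br k X ∈ 𝔨 := by
        have h1 : br k (A T) ∈ 𝔨 := hpair.h_le_k (hbrh k hk)
        have h2 : br k Y ∈ 𝔨 := hpair.h_le_k (hpair.bk_in_h k hk Y hYk)
        have : br k X = br k (A T) - br k Y := by
          rw [hX, map_sub]
        rw [this]; exact Submodule.sub_mem 𝔨 h1 h2
      have hbrXperp : br k X ∈ 𝔨ᗮ := by
        intro c hc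
        have h := hLie.adInv k X c
        have h2 : ⟪X, br k c⟫ = 0 := by
          rw [real_inner_comm]; exact hXmem (br k c) (hpair.subalg_k k hk c hc)
        have : ⟪br k X, c⟫ = 0 := by linarith
        rw [real_inner_comm] at this
        exact this
      have : ⟪br k X, br k X⟫ = 0 := hbrXperp (br k X) hbrX
      exact inner_self_eq_zero.mp this
    have : A T = Y := by rw [← sub_eq_zero]; exact hXzero
    exact ⟨this ▸ hYk, hAm T hTm⟩
  refine ⟨part1, ?_⟩
  intro X hX
  have hXm : X ∈ 𝔥ᗮ := Submodule.orthogonal_le hpair.h_le_k hX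
  have hAXm : A X ∈ 𝔥ᗮ := hAm X hXm
  intro k hk
  set T : G := pr 𝔥ᗮ k with hT
  have hkT : k - T ∈ 𝔥 := horth k
  have hTmem : T ∈ 𝔨 ⊓ 𝔥ᗮ := by
    constructor
    · have : T = k - (k - T) := by abel
      rw [this]
      exact Submodule.sub_mem 𝔨 hk (hpair.h_le_k hkT)
    · exact hprmem 𝔥ᗮ k
  have h1 : ⟪k - T, A X⟫ = 0 := hAXm (k - T) hkT
  have h2 : ⟪T, A X⟫ = 0 := by
    rw [← hAsym T hTmem.2 X hXm]
    exact hX (A T) (part1 T hTmem).1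
  have : ⟪k, A X⟫ = ⟪k - T, A X⟫ + ⟪T, A X⟫ := by
    rw [← inner_add_left, sub_add_cancel]
  rw [this, h1, h2, add_zero]
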